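/- Let m ≥ 1 and let the alphabet be α = (Bool × Bool) ⊕ Fin m. Let S : ℕ → α be computably unpredictable. Let B : Bool → Bool → ℕ → Bool be such that the uncurried map (x, y, n) ↦ B x y n is computable, and let s : ℕ → Bool → Bool → ℕ → Bool be such that the uncurried map (i, x, y, n) ↦ s i x y n is computable and there exists i₀ with s i₀ = B. Define the learner G : ℕ → ℕ by letting G n be the least index i such that for all j < n, if S j = Sum.inl (x, y) then s i x y j = B x y j. Then there exist N and an index i such that G n = i for all n ≥ N, and moreover s i x y n = B x y n for all but finitely many n and all x, y ∈ Bool. -/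

import Mathlib

/-- Analogue of Lemma 2 (property P1): if the switching sequence `S` over the
    alphabet `(Bool × Bool) ⊕ Fin m` is computably unpredictable, `B` is a
    computable box function occurring in the computable enumeration `s`, and `G`
    is the enumeration learner trained on the learning rounds of `S`, then `G`
    converges to an index `i` such that `s i` agrees with `B` on all but finitely
    many rounds (for all inputs `x, y`). -/
theorem learner_converges_to_box (m : ℕ) (hm : 1 ≤ m)
    (S : ℕ → (Bool × Bool) ⊕ Fin m)
    (hS : ∀ Γ : Set ((Bool × Bool) ⊕ Fin m), Γ.Nonempty → Γ ≠ Set.univ →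
      ∀ g : ℕ → Bool, Computable g → {n | g n = true}.Infinite →
        {n | g n = true ∧ S n ∈ Γ}.Infinite)
    (B : Bool → Bool → ℕ → Bool)
    (hB : Computable (fun p : Bool × Bool × ℕ => B p.1 p.2.1 p.2.2))
    (s : ℕ → Bool → Bool → ℕ → Bool)
    (hs : Computable (fun p : ℕ × Bool × Bool × ℕ => s p.1 p.2.1 p.2.2.1 p.2.2.2))
    (hs0 : ∃ i₀, s i₀ = B)
    (G : ℕ → ℕ)
    (hG : ∀ n, IsLeast
      {i : ℕ | ∀ j < n, ∀ x y : Bool, S j = Sum.inl (x, y) → s i x y j = B x y j}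
      (G n)) :
    ∃ N i, (∀ n, N ≤ n → G n = i) ∧
      {n : ℕ | ∃ x y : Bool, s i x y n ≠ B x y n}.Finite := by
  obtain ⟨i₀, hi₀⟩ := hs0
  -- G is monotone
  have hmono : Monotone G := by
    intro a b hab
    refine (hG a).2 ?_
    intro j hj x y hxy
    exact (hG b).1 j (lt_of_lt_of_le hj hab) x y hxy
  -- G is bounded by i₀
  have hbd : ∀ n, G n ≤ i₀ := by
    intro n
    refine (hG n).2 ?_
    intro j hj x y hxy
    rw [hi₀]
  have hbdd : BddAbove (Set.range G) := ⟨i₀, by rintro _ ⟨n, rfl⟩; exact hbd n⟩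
  have hne : (Set.range G).Nonempty := ⟨G 0, 0, rfl⟩
  obtain ⟨N, hN⟩ := Nat.sSup_mem hne hbdd
  set i := sSup (Set.range G) with hi
  have hstab : ∀ n, N ≤ n → G n = i := by
    intro n hn
    have h1 : G n ≤ i := le_csSup hbdd ⟨n, rfl⟩
    have h2 : i ≤ G n := hN ▸ hmono hn
    omega
  refine ⟨N, i, hstab, ?_⟩
  -- For each pair (x, y), the disagreement set is finite
  have key : ∀ x y : Bool, {n : ℕ | s i x y n ≠ B x y n}.Finite := by
    intro x y
    by_contra hfin
    have hinf : {n : ℕ | s i x y n ≠ B x y n}.Infinite :=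
      hfin
    set g : ℕ → Bool := fun n => decide (¬ s i x y n = B x y n) with hgdef
    have hgt : ∀ n, g n = true ↔ s i x y n ≠ B x y n := by
      intro n; simp [hgdef]
    have hsi : Computable fun n : ℕ => s i x y n :=
      hs.comp ((Computable.const i).pair ((Computable.const x).pair
        ((Computable.const y).pair Computable.id)))
    have hBi : Computable fun n : ℕ => B x y n :=
      hB.comp ((Computable.const x).pair ((Computable.const y).pair Computable.id))
    have heq : Computable fun n : ℕ => decide (s i x y n = B x y n) :=
      Primrec.eq.decide.to_comp.comp hsi hBi
    have hg : Computable g := by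
      have hnot : Computable (fun b : Bool => !b) := Primrec.to_comp Primrec.not
      have := hnot.comp heq
      convert this using 1
      funext n
      by_cases h : s i x y n = B x y n <;> simp [hgdef, h]
    have hgset : {n | g n = true} = {n : ℕ | s i x y n ≠ B x y n} := by
      ext n; exact hgt n
    have hginf : {n | g n = true}.Infinite := hgset ▸ hinf
    have hΓne : ({Sum.inl (x, y)} : Set ((Bool × Bool) ⊕ Fin m)).Nonempty :=
      ⟨Sum.inl (x, y), rfl⟩
    have hΓnu : ({Sum.inl (x, y)} : Set ((Bool × Bool) ⊕ Fin m)) ≠ Set.univ := by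
      intro h
      have : (Sum.inr ⟨0, hm⟩ : (Bool × Bool) ⊕ Fin m) ∈
          ({Sum.inl (x, y)} : Set ((Bool × Bool) ⊕ Fin m)) := h ▸ Set.mem_univ _
      simp at this
    have hinf2 := hS _ hΓne hΓnu g hg hginf
    obtain ⟨n, hn1, hn2⟩ := hinf2.nonempty
    have hSn : S n = Sum.inl (x, y) := hn2
    have hdis : s i x y n ≠ B x y n := (hgt n).mp hn1
    -- use convergence at time max N (n+1)
    have hGi : G (max N (n + 1)) = i := hstab _ (le_max_left _ _)
    have := (hG (max N (n + 1))).1 n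
      (lt_of_lt_of_le (Nat.lt_succ_self n) (le_max_right _ _)) x y hSn
    rw [hGi] at this
    exact hdis this
  have hsub : {n : ℕ | ∃ x y : Bool, s i x y n ≠ B x y n} ⊆
      ⋃ (x : Bool) (y : Bool), {n : ℕ | s i x y n ≠ B x y n} := by
    rintro n ⟨x, y, h⟩
    exact Set.mem_iUnion.mpr ⟨x, Set.mem_iUnion.mpr ⟨y, h⟩⟩
  exact Set.Finite.subset (Set.finite_iUnion fun x => Set.finite_iUnion fun y => key x y) hsub
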